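/- For every even n ≥ 14, the F-chromatic number of the generalized Kneser graph K(n, n/2, 3) is at most 14. -/

import Mathlib

open Finset

private def blk (n : ℕ) (x : Fin n) : ℕ :=
  if x.val < 6 then x.val else if x.val = n - 1 then 7 else 6

private def bf (n : ℕ) (s : Finset (Fin n)) (j : ℕ) : ℕ :=
  (s.filter (fun x => blk n x = j)).card

private def lA : Fin 7 → Fin 7 := ![0, 0, 0, 1, 1, 2, 2]
private def lB : Fin 7 → Fin 7 := ![1, 3, 5, 3, 4, 3, 4]
private def lC : Fin 7 → Fin 7 := ![2, 4, 6, 5, 6, 6, 5]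

set_option maxRecDepth 4000 in
private lemma fano : ∀ g : Fin 7 → Bool,
    ∃ i : Fin 7, g (lA i) = g (lB i) ∧ g (lA i) = g (lC i) := by decide

private lemma ldist : ∀ i : Fin 7,
    (lA i).val ≠ (lB i).val ∧ (lA i).val ≠ (lC i).val ∧ (lB i).val ≠ (lC i).val := by decide

private def LS (n : ℕ) (i : Fin 7) : Finset (Fin n) :=
  Finset.univ.filter
    (fun x => blk n x = (lA i).val ∨ blk n x = (lB i).val ∨ blk n x = (lC i).val)

private lemma sum_bf (n : ℕ) (s : Finset (Fin n)) :
    s.card = ∑ j ∈ Finset.range 8, bf n s j := by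
  apply Finset.card_eq_sum_card_fiberwise
  intro x _
  have := x.isLt
  simp only [Finset.mem_coe, Finset.mem_range, blk]
  split_ifs <;> omega

private lemma split3 (n : ℕ) (s : Finset (Fin n)) {a b c : ℕ}
    (hab : a ≠ b) (hac : a ≠ c) (hbc : b ≠ c) :
    (s.filter (fun x => blk n x = a ∨ blk n x = b ∨ blk n x = c)).card
      = bf n s a + bf n s b + bf n s c := by
  have d23 : Disjoint (s.filter fun x => blk n x = b) (s.filter fun x => blk n x = c) := by
    rw [Finset.disjoint_left]
    intro x hx hx'
    simp only [Finset.mem_filter] at hx hx'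
    omega
  have d1 : Disjoint (s.filter fun x => blk n x = a)
      ((s.filter fun x => blk n x = b) ∪ s.filter fun x => blk n x = c) := by
    rw [Finset.disjoint_left]
    intro x hx hx'
    simp only [Finset.mem_union, Finset.mem_filter] at hx hx'
    omega
  rw [Finset.filter_or, Finset.filter_or, Finset.card_union_of_disjoint d1,
    Finset.card_union_of_disjoint d23]
  simp only [bf]
  omega

private lemma bf_univ_eq (n : ℕ) (hn : 14 ≤ n) (j : ℕ) (hj : j < 6 ∨ j = 7) :
    bf n Finset.univ j = 1 := by
  rcases hj with hj | hj
  · have h : (Finset.univ.filter (fun x : Fin n => blk n x = j))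
        = {(⟨j, by omega⟩ : Fin n)} := by
      ext x
      have := x.isLt
      simp only [Finset.mem_filter, Finset.mem_univ, true_and, Finset.mem_singleton,
        Fin.ext_iff]
      simp only [blk]
      split_ifs <;> omega
    rw [bf, h, Finset.card_singleton]
  · have h : (Finset.univ.filter (fun x : Fin n => blk n x = j))
        = {(⟨n - 1, by omega⟩ : Fin n)} := by
      ext x
      have := x.isLt
      simp only [Finset.mem_filter, Finset.mem_univ, true_and, Finset.mem_singleton,
        Fin.ext_iff]
      simp only [blk]
      split_ifs <;> omega
    rw [bf, h, Finset.card_singleton]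

private lemma bf_univ_six (n : ℕ) (hn : 14 ≤ n) : bf n Finset.univ 6 = n - 7 := by
  have h := sum_bf n (Finset.univ : Finset (Fin n))
  rw [Finset.card_univ, Fintype.card_fin] at h
  have h0 := bf_univ_eq n hn 0 (by omega)
  have h1 := bf_univ_eq n hn 1 (by omega)
  have h2 := bf_univ_eq n hn 2 (by omega)
  have h3 := bf_univ_eq n hn 3 (by omega)
  have h4 := bf_univ_eq n hn 4 (by omega)
  have h5 := bf_univ_eq n hn 5 (by omega)
  have h7 := bf_univ_eq n hn 7 (by omega)
  simp only [Finset.sum_range_succ, Finset.sum_range_zero] at h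
  omega

private lemma mval (n : ℕ) (hn : 14 ≤ n) (j : ℕ) (hj : j < 7) :
    (j = 6 → bf n Finset.univ j = n - 7) ∧ (j ≠ 6 → bf n Finset.univ j = 1) :=
  ⟨fun h => h ▸ bf_univ_six n hn, fun h => bf_univ_eq n hn j (by omega)⟩

private lemma inter_LS (n : ℕ) (s : Finset (Fin n)) (i : Fin 7) :
    (s ∩ LS n i).card = bf n s (lA i).val + bf n s (lB i).val + bf n s (lC i).val := by
  have h : s ∩ LS n i = s.filter
      (fun x => blk n x = (lA i).val ∨ blk n x = (lB i).val ∨ blk n x = (lC i).val) := by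
    ext x
    simp only [LS, Finset.mem_inter, Finset.mem_filter, Finset.mem_univ, true_and]
  rw [h, split3 n s (ldist i).1 (ldist i).2.1 (ldist i).2.2]

private lemma card_LS (n : ℕ) (i : Fin 7) :
    (LS n i).card = bf n Finset.univ (lA i).val + bf n Finset.univ (lB i).val
      + bf n Finset.univ (lC i).val :=
  split3 n Finset.univ (ldist i).1 (ldist i).2.1 (ldist i).2.2

private lemma bf_mono (n : ℕ) (s : Finset (Fin n)) (j : ℕ) :
    bf n s j ≤ bf n Finset.univ j :=
  Finset.card_le_card (Finset.filter_subset_filter _ (Finset.subset_univ s))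

/-- For every even `n ≥ 14`, the F-chromatic number of the generalized Kneser graph
`K(n, n/2, 3)` is at most `14`: there are `14` Frankl sets covering all `(n/2)`-element
subsets of `{1,…,n}`. -/
theorem fChromatic_s3_le_fourteen (n : ℕ) (hn : Even n) (h14 : 14 ≤ n) :
    ∃ A : Fin 14 → Finset (Fin n), (∀ i, 3 ≤ (A i).card) ∧
      ∀ v : Finset (Fin n), v.card = n / 2 →
        ∃ i, (A i).card + 3 ≤ 2 * (v ∩ A i).card := by
  classical
  obtain ⟨r, hr⟩ := hn
  set A : Fin 14 → Finset (Fin n) := fun i =>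
    if i.val < 7 then LS n ⟨i.val % 7, Nat.mod_lt _ (by norm_num)⟩
    else (LS n ⟨i.val % 7, Nat.mod_lt _ (by norm_num)⟩)ᶜ with hA
  have key : ∀ i : Fin 7,
      3 ≤ (LS n i).card ∧ (LS n i).card ≤ n - 5 := by
    intro i
    have hca := mval n h14 (lA i).val (lA i).isLt
    have hcb := mval n h14 (lB i).val (lB i).isLt
    have hcc := mval n h14 (lC i).val (lC i).isLt
    have hd := ldist i
    rw [card_LS]
    omega
  refine ⟨A, ?_, ?_⟩
  · intro i
    by_cases h : i.val < 7
    · simpa [hA, h] using (key _).1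
    · have hk := key (⟨i.val % 7, Nat.mod_lt _ (by norm_num)⟩ : Fin 7)
      simp only [hA, h, if_false, Finset.card_compl, Fintype.card_fin]
      omega
  · intro v hv
    obtain ⟨i, gab, gac⟩ := fano (fun j => decide (bf n Finset.univ j.val < 2 * bf n v j.val))
    simp only [decide_eq_decide] at gab gac
    have hca := mval n h14 (lA i).val (lA i).isLt
    have hcb := mval n h14 (lB i).val (lB i).isLt
    have hcc := mval n h14 (lC i).val (lC i).isLt
    have hd := ldist i
    have hma := bf_mono n v (lA i).val
    have hmb := bf_mono n v (lB i).val
    have hmc := bf_mono n v (lC i).val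
    by_cases hP : bf n Finset.univ (lA i).val < 2 * bf n v (lA i).val
    · -- positive monochromatic line: use the union of blocks
      refine ⟨⟨i.val, by omega⟩, ?_⟩
      have hfin : (⟨i.val % 7, Nat.mod_lt _ (by norm_num)⟩ : Fin 7) = i := by
        apply Fin.ext
        simp [Nat.mod_eq_of_lt i.isLt]
      have hlt : (i.val : ℕ) < 7 := i.isLt
      simp only [hA, hlt, if_true, hfin]
      rw [card_LS, inter_LS]
      have h2 := gab.mp hP
      have h3 := gac.mp hP
      omega
    · -- negative monochromatic line: use the complement
      refine ⟨⟨i.val + 7, by omega⟩, ?_⟩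
      have hfin : (⟨(i.val + 7) % 7, Nat.mod_lt _ (by norm_num)⟩ : Fin 7) = i := by
        apply Fin.ext
        simp [Nat.add_mod, Nat.mod_eq_of_lt i.isLt]
      have hlt : ¬ ((i.val + 7 : ℕ) < 7) := by omega
      simp only [hA, hlt, if_false, hfin]
      have h2 : ¬ (bf n Finset.univ (lB i).val < 2 * bf n v (lB i).val) := fun h => hP (gab.mpr h)
      have h3 : ¬ (bf n Finset.univ (lC i).val < 2 * bf n v (lC i).val) := fun h => hP (gac.mpr h)
      have hcompl : ((LS n i)ᶜ).card = n - (LS n i).card := by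
        rw [Finset.card_compl, Fintype.card_fin]
      have hvcap : (v ∩ (LS n i)ᶜ).card = v.card - (v ∩ LS n i).card := by
        have h1 : v ∩ (LS n i)ᶜ = v \ LS n i := by
          ext x; simp [Finset.mem_sdiff]
        have h2 := Finset.card_inter_add_card_sdiff v (LS n i)
        rw [h1]
        omega
      have hkey := key i
      have hin := inter_LS n v i
      rw [hcompl, hvcap, hin, card_LS]
      omega
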